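/- Let F be a finite field of order q^2, f a nonzero polynomial over F, and r a nonzero element of the algebraic closure of F that is a root of f with multiplicity m. Then r^{−q} is a root of the conjugate-reciprocal polynomial f^{*τ} with multiplicity m. -/

import Mathlib

open Polynomial

private lemma rev_pow {K : Type*} [Field K] (a : K[X]) (n : ℕ) :
    (a ^ n).reverse = a.reverse ^ n := by
  induction n with
  | zero => simp [reverse]
  | succ n ih => rw [pow_succ, reverse_mul_of_domain, ih, pow_succ]

private lemma rootMultiplicity_reverse {K : Type*} [Field K] (p : K[X]) (hp : p ≠ 0)
    (s : K) (hs : s ≠ 0) :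
    p.reverse.rootMultiplicity s⁻¹ = p.rootMultiplicity s := by
  classical
  set m := p.rootMultiplicity s with hm
  set u := p /ₘ (X - C s) ^ m with hu
  have hpu : (X - C s) ^ m * u = p := pow_mul_divByMonic_rootMultiplicity_eq p s
  have hus : u.eval s ≠ 0 := eval_divByMonic_pow_rootMultiplicity_ne_zero s hp
  have hXrev : ((X : K[X]) - C s).reverse = -C s * (X - C s⁻¹) := by
    have h1 : ((X : K[X]) - C s) = X + C (-s) := by ring_nf; rw [map_neg]; ring
    have hX : ((X : K[X])).natDegree = 1 := natDegree_X
    have h2 : ((X : K[X])).reverse = 1 := by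
      rw [reverse, hX]
      ext i
      rw [coeff_reflect]
      rcases Nat.lt_or_ge 1 i with hi | hi
      · rw [revAt_eq_self_of_lt hi, coeff_X, coeff_one, if_neg (by omega), if_neg (by omega)]
      · interval_cases i <;> simp [revAt_le, coeff_one]
    have hC : (C s : K[X]) * C s⁻¹ = 1 := by rw [← C_mul, mul_inv_cancel₀ hs, C_1]
    rw [h1, reverse_add_C, h2, hX, pow_one, map_neg]
    linear_combination -hC
  have hrev : p.reverse = (-C s) ^ m * ((X - C s⁻¹) ^ m * u.reverse) := by
    rw [← hpu, reverse_mul_of_domain, rev_pow, hXrev, mul_pow, mul_assoc]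
  have hne : p.reverse ≠ 0 := by rwa [Ne, reverse_eq_zero]
  have hne' : (-C s) ^ m * ((X - C s⁻¹) ^ m * u.reverse) ≠ 0 := hrev ▸ hne
  rw [hrev, rootMultiplicity_mul hne', rootMultiplicity_mul (right_ne_zero_of_mul hne')]
  have h0 : rootMultiplicity s⁻¹ ((-C s) ^ m) = 0 := by
    apply rootMultiplicity_eq_zero
    simp [IsRoot, hs]
  have h2 : rootMultiplicity s⁻¹ u.reverse = 0 := by
    apply rootMultiplicity_eq_zero
    letI : Invertible s := invertibleOfNonzero hs
    have this' := eval₂_reverse_mul_pow (RingHom.id K) s u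
    rw [invOf_eq_inv] at this'
    have this : u.reverse.eval s⁻¹ * s ^ u.natDegree = u.eval s := this'
    intro hroot
    rw [IsRoot] at hroot
    rw [hroot, zero_mul] at this
    exact hus this.symm
  rw [h0, h2, rootMultiplicity_X_sub_C_pow]
  simp

/-- For `F` of order `q^2`, a nonzero polynomial `f` over `F`, and a nonzero root `r` of `f`
in the algebraic closure of multiplicity `m`, the element `r^{-q}` is a root of the
conjugate-reciprocal `f^{*τ}` of multiplicity `m`. -/
theorem stmt4 (q : ℕ) (hq : IsPrimePow q) (F : Type) [Field F] [Fintype F]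
    (hF : Fintype.card F = q ^ 2) (f : Polynomial F) (hf : f ≠ 0)
    (r : AlgebraicClosure F) (hr : r ≠ 0) (m : ℕ)
    (hm : (f.map (algebraMap F (AlgebraicClosure F))).rootMultiplicity r = m) :
    ((∑ k ∈ Finset.range (f.natDegree + 1),
        Polynomial.C ((f.coeff (f.natDegree - k)) ^ q) * Polynomial.X ^ k).map
          (algebraMap F (AlgebraicClosure F))).rootMultiplicity (r ^ (-(q : ℤ))) = m := by
  classical
  obtain ⟨p, e, hpp, he, hpe⟩ := hq
  have hq0 : q ≠ 0 := by
    rw [← hpe]; exact pow_ne_zero e hpp.ne_zero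
  have hp : p.Prime := hpp.nat_prime
  -- characteristic of F is p
  have hcharF : CharP F p := by
    have hc : CharP F (ringChar F) := ringChar.charP F
    obtain ⟨n, hcp, hcard⟩ := FiniteField.card F (ringChar F)
    have hqq : p ^ (2 * e) = (ringChar F) ^ (n : ℕ) := by
      rw [← hcard, hF, ← hpe, ← pow_mul, mul_comm e 2]
    have hpc : p = ringChar F := by
      have hdvd : p ∣ (ringChar F) ^ (n : ℕ) := by
        rw [← hqq]
        exact dvd_pow_self p (by omega)
      exact ((Nat.prime_dvd_prime_iff_eq hp hcp).mp (hp.dvd_of_dvd_pow hdvd))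
    rwa [hpc]
  haveI hcharK : CharP (AlgebraicClosure F) p := charP_of_injective_algebraMap (algebraMap F (AlgebraicClosure F)).injective p
  haveI : ExpChar (AlgebraicClosure F) p := .prime hp
  set φ : AlgebraicClosure F →+* AlgebraicClosure F := iterateFrobenius (AlgebraicClosure F) p e with hφ
  have hφ_def : ∀ x : AlgebraicClosure F, φ x = x ^ q := fun x => by
    rw [hφ, iterateFrobenius_def, hpe]
  set f' : (AlgebraicClosure F)[X] := f.map (algebraMap F (AlgebraicClosure F)) with hf'
  have hf'0 : f' ≠ 0 := by
    rwa [hf', Ne, Polynomial.map_eq_zero_iff (algebraMap F (AlgebraicClosure F)).injective]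
  have hn' : f'.natDegree = f.natDegree :=
    natDegree_map_eq_of_injective (algebraMap F (AlgebraicClosure F)).injective f
  have hnφ : (f'.map φ).natDegree = f.natDegree := by
    rw [natDegree_map_eq_of_injective φ.injective, hn']
  have hfφ0 : f'.map φ ≠ 0 := by
    rwa [Ne, Polynomial.map_eq_zero_iff φ.injective]
  set n := f.natDegree
  have key : ((∑ k ∈ Finset.range (n + 1),
      Polynomial.C ((f.coeff (n - k)) ^ q) * Polynomial.X ^ k).map (algebraMap F (AlgebraicClosure F)))
      = (f'.map φ).reverse := by
    rw [reverse, hnφ]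
    ext i
    rw [coeff_reflect, coeff_map, finset_sum_coeff]
    simp only [coeff_C_mul, coeff_X_pow, mul_ite, mul_one, mul_zero]
    rw [Finset.sum_ite_eq (Finset.range (n + 1)) i]
    rw [coeff_map, coeff_map, hφ_def, ← map_pow]
    rcases Nat.lt_or_ge n i with hi | hi
    · rw [if_neg (by simp; omega), revAt_eq_self_of_lt hi,
        coeff_eq_zero_of_natDegree_lt (by exact hi), map_zero, zero_pow hq0, map_zero]
    · rw [if_pos (by simp; omega), revAt_le hi]
  rw [key]
  have hrq : r ^ q ≠ 0 := pow_ne_zero _ hr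
  have hzpow : r ^ (-(q : ℤ)) = (r ^ q)⁻¹ := by
    rw [zpow_neg, zpow_natCast]
  rw [hzpow, rootMultiplicity_reverse _ hfφ0 _ hrq]
  have : r ^ q = φ r := (hφ_def r).symm
  rw [this, ← eq_rootMultiplicity_map φ.injective]
  exact hm
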